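/- Let (S, 𝒜, μ) be a measure space, 1 < p < ∞, K_p the positive cone of L^p(S,μ), and P_{K_p}(f) = f⁺ the metric projection onto K_p. For every f ∈ K_p (i.e., f ≥ 0 a.e.) and every h ∈ L^p, one has limsup_{h → f} (⟨J(f), h − f⟩ − ⟨J(f), h⁺ − f⁺⟩)/(‖h − f‖_p + ‖h⁺ − f⁺‖_p) ≤ 0; equivalently, J(f) ∈ D̂*P_{K_p}(f)(J(f)), where D̂* is the Mordukhovich (Fréchet) coderivative and J the normalized duality mapping of L^p. -/

import Mathlib

open MeasureTheory Filter
open scoped ENNReal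

lemma limsup_nonpos_of_forall {α : Type*} {l : Filter α} {u : α → ℝ}
    (h : ∀ x, u x ≤ 0) : Filter.limsup u l ≤ 0 := by
  rw [Filter.limsup_eq]
  have h0 : (0 : ℝ) ∈ {a | ∀ᶠ n in l, u n ≤ a} := Eventually.of_forall h
  by_cases hb : BddBelow {a : ℝ | ∀ᶠ n in l, u n ≤ a}
  · exact csInf_le hb h0
  · rw [Real.sInf_of_not_bddBelow hb]

/-- Theorem 5.2(c): for `f` in the positive cone of `L^p`,
`J(f) ∈ D̂*P_{K_p}(f)(J(f))`, i.e. the coderivative limsup is `≤ 0`, where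
`P_{K_p}(h) = h⁺` and `J(f)(s) = |f(s)|^{p−2} f(s)/‖f‖^{p−2}`. -/
theorem stmt19 {S : Type*} [MeasurableSpace S] (μ : Measure S) (p : ℝ≥0∞) [Fact (1 ≤ p)]
    (hp : 1 < p.toReal) (hpt : p ≠ ⊤) (f : Lp ℝ p μ) (hf : 0 ≤ f) :
    Filter.limsup (fun h : Lp ℝ p μ =>
        ((∫ s, (|f s| ^ (p.toReal - 2) * f s / ‖f‖ ^ (p.toReal - 2)) * (h s - f s) ∂μ) -
          (∫ s, (|f s| ^ (p.toReal - 2) * f s / ‖f‖ ^ (p.toReal - 2)) *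
            (Lp.posPart h s - Lp.posPart f s) ∂μ)) /
          (‖h - f‖ + ‖Lp.posPart h - Lp.posPart f‖))
      (nhdsWithin f {f}ᶜ) ≤ (0 : ℝ) := by
  set c : ℝ := ‖f‖ ^ (p.toReal - 2) with hc
  have hc0 : 0 ≤ c := Real.rpow_nonneg (norm_nonneg f) _
  set g : S → ℝ := fun s => |f s| ^ (p.toReal - 2) * f s / c with hg
  -- basic exponent facts
  have hp0 : p ≠ 0 := fun h => by rw [h] at hp; norm_num at hp
  have hp1 : (1 : ℝ≥0∞) ≤ p := Fact.out
  have hpR1 : (0 : ℝ) < p.toReal - 1 := by linarith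
  -- q : conjugate exponent
  set q : ℝ≥0∞ := p / (p - 1) with hq
  have hq_eq : (1 : ℝ≥0∞) / 1 = 1 / q + 1 / p := by
    rw [hq, one_div, one_div, ENNReal.inv_div (Or.inr hpt) (Or.inr hp0),
      ENNReal.div_add_div_same, tsub_add_cancel_of_le hp1, ENNReal.div_self hp0 hpt, inv_one]
  -- membership of g in L^q
  have hfm : AEMeasurable (fun s => f s) μ := (Lp.aestronglyMeasurable f).aemeasurable
  have habs : AEMeasurable (fun s => |f s|) μ := by
    have := (Lp.aestronglyMeasurable f).norm.aemeasurable
    simpa [Real.norm_eq_abs] using this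
  have hgm : AEStronglyMeasurable g μ := by
    have : AEMeasurable g μ := ((habs.pow_const _).mul hfm).div_const c
    exact this.aestronglyMeasurable
  have hrp : MemLp (fun x : S => ‖f x‖ ^ (p - 1).toReal) (p / (p - 1)) μ :=
    (Lp.memLp f).norm_rpow_div (p - 1)
  have htr : (p - 1).toReal = p.toReal - 1 := by
    rw [ENNReal.toReal_sub_of_le hp1 hpt, ENNReal.toReal_one]
  have hgq : MemLp g q μ := by
    refine MemLp.of_le (hrp.const_mul c⁻¹) hgm (Eventually.of_forall fun s => ?_)
    rw [htr]
    have key : |f s| ^ (p.toReal - 2) * |f s| = |f s| ^ (p.toReal - 1) := by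
      rcases eq_or_ne (f s) 0 with h0 | h0
      · simp [h0, Real.zero_rpow (ne_of_gt hpR1)]
      · rw [show p.toReal - 1 = (p.toReal - 2) + 1 by ring,
          Real.rpow_add_one (abs_ne_zero.mpr h0)]
    have h1 : ‖g s‖ = c⁻¹ * |f s| ^ (p.toReal - 1) := by
      rw [hg, Real.norm_eq_abs, abs_div, abs_mul, abs_of_nonneg hc0,
        abs_of_nonneg (Real.rpow_nonneg (abs_nonneg (f s)) _), key, div_eq_inv_mul]
    have h2 : ‖c⁻¹ * ‖f s‖ ^ (p.toReal - 1)‖ = c⁻¹ * |f s| ^ (p.toReal - 1) := by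
      simp only [Real.norm_eq_abs, abs_mul, abs_abs,
        abs_of_nonneg (inv_nonneg.mpr hc0),
        abs_of_nonneg (Real.rpow_nonneg (abs_nonneg (f s)) _)]
    rw [h1, h2]
  -- integrability of the two products
  have hint : ∀ F : S → ℝ, MemLp F p μ → Integrable (fun s => g s * F s) μ := by
    intro F hF
    have h1 := hF.smul hgq (hpqr := ⟨by simpa only [one_div] using hq_eq.symm⟩)
    exact (memLp_one_iff_integrable.mp h1).congr (Eventually.of_forall fun _ => rfl)
  -- main pointwise bound
  refine limsup_nonpos_of_forall fun h => ?_
  have hintA : Integrable (fun s => g s * (h s - f s)) μ :=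
    hint _ ((Lp.memLp h).sub (Lp.memLp f))
  have hintB : Integrable (fun s => g s * (Lp.posPart h s - Lp.posPart f s)) μ :=
    hint _ ((Lp.memLp (Lp.posPart h)).sub (Lp.memLp (Lp.posPart f)))
  have hnum : (∫ s, g s * (h s - f s) ∂μ) -
      (∫ s, g s * (Lp.posPart h s - Lp.posPart f s) ∂μ) ≤ 0 := by
    rw [← integral_sub hintA hintB]
    refine integral_nonpos_of_ae ?_
    have hfpos : 0 ≤ᵐ[μ] ⇑f := (Lp.coeFn_nonneg f).mpr hf
    filter_upwards [hfpos, Lp.coeFn_posPart h, Lp.coeFn_posPart f] with s hfs hhp hfp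
    have hfs' : (0 : ℝ) ≤ f s := hfs
    have hg0 : 0 ≤ g s := div_nonneg
      (mul_nonneg (Real.rpow_nonneg (abs_nonneg (f s)) _) hfs') hc0
    simp only [Pi.zero_apply]
    rw [hhp, hfp, max_eq_left hfs']
    have heq : g s * (h s - f s) - g s * (max (h s) 0 - f s)
        = g s * (h s - max (h s) 0) := by ring
    rw [heq]
    exact mul_nonpos_of_nonneg_of_nonpos hg0 (sub_nonpos.mpr (le_max_left _ _))
  exact div_nonpos_of_nonpos_of_nonneg hnum
    (add_nonneg (norm_nonneg _) (norm_nonneg _))
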